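/- Let q be a prime power and m, r, g positive integers, and let C ⊆ F_{q^m}^{gr} be an F_{q^m}-linear code with 1 ≤ dim_{F_{q^m}}(C) ≤ gr − 1. Then C is MSRD for the length partition (g, r) over F_q if and only if its dual code C^⊥ = { d ∈ F_{q^m}^{gr} : c·d = 0 for all c ∈ C } (with respect to the standard inner product c·d = Σ_j c_j d_j) is MSRD for the length partition (g, r) over F_q. -/

import Mathlib

/-- The sum-rank weight of a vector partitioned into blocks of length `r`, over the base
field `Fq`: the sum over blocks of the `Fq`-dimension of the span of the block entries. -/
noncomputable def wtSR (Fq : Type) {L : Type} [Field Fq] [Field L] [Algebra Fq L]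
    {ι : Type} [Fintype ι] {r : ℕ} (c : ι × Fin r → L) : ℕ :=
  ∑ i : ι, Module.finrank Fq
    ↥(Submodule.span Fq (Set.range fun j : Fin r => c (i, j)))

/-- The minimum sum-rank distance of a code (a set of vectors), over the base field
`Fq`, for blocks of length `r`. -/
noncomputable def dSR (Fq : Type) {L : Type} [Field Fq] [Field L] [Algebra Fq L]
    {ι : Type} [Fintype ι] {r : ℕ} (C : Set (ι × Fin r → L)) : ℕ :=
  sInf {w | ∃ c ∈ C, ∃ d ∈ C, c ≠ d ∧ wtSR Fq (c - d) = w}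

open Module Submodule Matrix
set_option linter.unusedSectionVars false

noncomputable section AuxMSRD

variable {Fq K : Type} [Field Fq] [Field K] [Fintype Fq] [Fintype K] [Algebra Fq K]
variable {g r : ℕ}

/-- Hamming weight. -/
def wtH {g r : ℕ} (c : Fin g × Fin r → K) : ℕ := Nat.card {p : Fin g × Fin r // c p ≠ 0}

lemma wtH_sum (c : Fin g × Fin r → K) :
    wtH c = ∑ i : Fin g, Nat.card {j : Fin r // c (i, j) ≠ 0} := by
  classical
  have e : {p : Fin g × Fin r // c p ≠ 0} ≃ Σ i : Fin g, {j : Fin r // c (i, j) ≠ 0} :=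
    { toFun := fun p => ⟨p.1.1, ⟨p.1.2, by simpa using p.2⟩⟩
      invFun := fun x => ⟨(x.1, x.2.1), x.2.2⟩
      left_inv := fun p => by ext <;> rfl
      right_inv := fun x => rfl }
  rw [wtH, Nat.card_congr e, Nat.card_eq_fintype_card, Fintype.card_sigma]
  congr 1
  ext i
  rw [Nat.card_eq_fintype_card]

lemma finrank_span_le_card_ne (v : Fin r → K) :
    finrank Fq (span Fq (Set.range v)) ≤ Nat.card {j : Fin r // v j ≠ 0} := by
  classical
  set s : Finset K := (Finset.univ.filter fun j => v j ≠ 0).image v with hs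
  have hspan : span Fq (Set.range v) = span Fq (s : Set K) := by
    apply le_antisymm
    · rw [Submodule.span_le]
      rintro x ⟨j, rfl⟩
      by_cases h : v j = 0
      · rw [h]; exact Submodule.zero_mem _
      · exact Submodule.subset_span (by simp only [hs, Finset.coe_image, Set.mem_image]; exact ⟨j, by simp [h], rfl⟩)
    · apply Submodule.span_mono
      intro x hx
      simp only [hs, Finset.coe_image, Set.mem_image] at hx
      obtain ⟨j, _, rfl⟩ := hx
      exact Set.mem_range_self j
  rw [hspan]
  calc finrank Fq (span Fq (s : Set K)) ≤ s.card := finrank_span_finset_le_card s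
    _ ≤ (Finset.univ.filter fun j => v j ≠ 0).card := Finset.card_image_le
    _ = Nat.card {j : Fin r // v j ≠ 0} := by
        rw [Nat.card_eq_fintype_card, Fintype.card_subtype]

lemma wtSR_le_wtH (c : Fin g × Fin r → K) : wtSR Fq c ≤ wtH c := by
  rw [wtH_sum, wtSR]
  exact Finset.sum_le_sum fun i _ => finrank_span_le_card_ne _

lemma wtSR_le_card (c : Fin g × Fin r → K) : wtSR Fq c ≤ g * r := by
  classical
  have h : ∀ i : Fin g, finrank Fq (span Fq (Set.range fun j : Fin r => c (i, j))) ≤ r := by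
    intro i
    have : Set.range (fun j : Fin r => c (i, j)) =
        ((Finset.univ.image fun j : Fin r => c (i, j)) : Set K) := by simp
    rw [this]
    calc finrank Fq (span Fq _) ≤ _ := finrank_span_finset_le_card _
      _ ≤ Fintype.card (Fin r) := by
          simpa using Finset.card_image_le (s := (Finset.univ : Finset (Fin r)))
            (f := fun j => c (i, j))
      _ = r := by simp
  calc wtSR Fq c ≤ ∑ _i : Fin g, r := Finset.sum_le_sum fun i _ => h i
    _ = g * r := by simp [Finset.sum_const, mul_comm]

lemma wtSR_pos (c : Fin g × Fin r → K) (hc : c ≠ 0) : 1 ≤ wtSR Fq c := by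
  haveI : FiniteDimensional Fq K := Module.Finite.of_finite
  obtain ⟨p, hp⟩ : ∃ p, c p ≠ 0 := by
    by_contra h
    push_neg at h
    exact hc (funext fun p => h p)
  have hmem : c (p.1, p.2) ∈ span Fq (Set.range fun j : Fin r => c (p.1, j)) :=
    Submodule.subset_span (Set.mem_range_self p.2)
  have hpos : 0 < finrank Fq (span Fq (Set.range fun j : Fin r => c (p.1, j))) := by
    rw [Module.finrank_pos_iff]
    exact Submodule.nontrivial_iff_ne_bot.mpr fun hbot => by
      rw [hbot] at hmem
      exact hp (by simpa using hmem)
  rw [wtSR]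
  calc 1 ≤ finrank Fq (span Fq (Set.range fun j : Fin r => c (p.1, j))) := hpos
    _ ≤ _ := Finset.single_le_sum (f := fun i => finrank Fq
        ↥(span Fq (Set.range fun j : Fin r => c (i, j)))) (fun i _ => Nat.zero_le _)
        (Finset.mem_univ p.1)

/-- Block-diagonal linear action on `Fin g × Fin r → K` by matrices. -/
def phi (M : Fin g → Matrix (Fin r) (Fin r) K) :
    (Fin g × Fin r → K) →ₗ[K] (Fin g × Fin r → K) where
  toFun c := fun p => (M p.1).mulVec (fun k => c (p.1, k)) p.2
  map_add' c d := by
    funext p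
    show (M p.1).mulVec ((fun k => c (p.1, k)) + fun k => d (p.1, k)) p.2 = _
    rw [Matrix.mulVec_add]
    rfl
  map_smul' a c := by
    funext p
    show (M p.1).mulVec (a • fun k => c (p.1, k)) p.2 = _
    rw [Matrix.mulVec_smul]
    rfl

lemma phi_apply (M : Fin g → Matrix (Fin r) (Fin r) K) (c : Fin g × Fin r → K)
    (i : Fin g) (j : Fin r) : phi M c (i, j) = (M i).mulVec (fun k => c (i, k)) j := rfl

lemma phi_phi (M N : Fin g → Matrix (Fin r) (Fin r) K) (c : Fin g × Fin r → K) :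
    phi M (phi N c) = phi (fun i => M i * N i) c := by
  funext p
  obtain ⟨i, j⟩ := p
  have h : (fun k => phi N c (i, k)) = (N i).mulVec (fun k => c (i, k)) := rfl
  rw [phi_apply, h, Matrix.mulVec_mulVec, phi_apply]

lemma phi_one (c : Fin g × Fin r → K) : phi (fun _ => (1 : Matrix (Fin r) (Fin r) K)) c = c := by
  funext p
  obtain ⟨i, j⟩ := p
  rw [phi_apply, Matrix.one_mulVec]

/-- The action by matrices with entries from `Fq`. -/
def phiFq (N : Fin g → Matrix (Fin r) (Fin r) Fq) :
    (Fin g × Fin r → K) →ₗ[K] (Fin g × Fin r → K) :=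
  phi (fun i => (N i).map (algebraMap Fq K))

lemma phiFq_phiFq (M N : Fin g → Matrix (Fin r) (Fin r) Fq) (c : Fin g × Fin r → K) :
    phiFq (K := K) M (phiFq N c) = phiFq (fun i => M i * N i) c := by
  have h : (fun i => (M i).map (algebraMap Fq K) * (N i).map (algebraMap Fq K)) =
      fun i => (M i * N i).map (algebraMap Fq K) := by
    funext i; rw [Matrix.map_mul]
  simp only [phiFq]
  rw [phi_phi, h]

lemma phiFq_inv (N : Fin g → Matrix (Fin r) (Fin r) Fq) (hN : ∀ i, IsUnit (N i).det)
    (c : Fin g × Fin r → K) : phiFq (fun i => (N i)⁻¹) (phiFq N c) = c := by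
  rw [phiFq_phiFq]
  have : (fun i => (N i)⁻¹ * N i) = fun _ => (1 : Matrix (Fin r) (Fin r) Fq) := by
    funext i; exact Matrix.nonsing_inv_mul _ (hN i)
  rw [this, phiFq]
  have : (fun _ : Fin g => ((1 : Matrix (Fin r) (Fin r) Fq)).map (algebraMap Fq K)) =
      fun _ => (1 : Matrix (Fin r) (Fin r) K) := by
    funext i
    exact Matrix.map_one _ (map_zero _) (map_one _)
  rw [this, phi_one]

/-- The linear equivalence induced by invertible `Fq`-matrices. -/
def phiEquiv (N : Fin g → Matrix (Fin r) (Fin r) Fq) (hN : ∀ i, IsUnit (N i).det) :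
    (Fin g × Fin r → K) ≃ₗ[K] (Fin g × Fin r → K) :=
  LinearEquiv.ofLinear (phiFq N) (phiFq (fun i => (N i)⁻¹))
    (by
      apply LinearMap.ext
      intro c
      show phiFq N (phiFq (fun i => (N i)⁻¹) c) = c
      rw [phiFq_phiFq]
      have h1 : (fun i => N i * (N i)⁻¹) = fun _ => (1 : Matrix (Fin r) (Fin r) Fq) := by
        funext i; exact Matrix.mul_nonsing_inv _ (hN i)
      rw [h1, phiFq]
      have h2 : (fun _ : Fin g => ((1 : Matrix (Fin r) (Fin r) Fq)).map (algebraMap Fq K)) =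
          fun _ => (1 : Matrix (Fin r) (Fin r) K) := by
        funext i; exact Matrix.map_one _ (map_zero _) (map_one _)
      rw [h2, phi_one])
    (by
      apply LinearMap.ext
      intro c
      exact phiFq_inv N hN c)

lemma phiEquiv_coe (N : Fin g → Matrix (Fin r) (Fin r) Fq) (hN : ∀ i, IsUnit (N i).det) :
    (phiEquiv (K := K) N hN : (Fin g × Fin r → K) →ₗ[K] (Fin g × Fin r → K)) = phiFq N := rfl

lemma span_phiFq_le (N : Fin g → Matrix (Fin r) (Fin r) Fq) (c : Fin g × Fin r → K) (i : Fin g) :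
    Submodule.span Fq (Set.range fun j : Fin r => phiFq N c (i, j)) ≤
      Submodule.span Fq (Set.range fun j : Fin r => c (i, j)) := by
  rw [Submodule.span_le]
  rintro x ⟨j, rfl⟩
  show ((N i).map (algebraMap Fq K)).mulVec (fun k => c (i, k)) j ∈ _
  rw [Matrix.mulVec, dotProduct]
  apply Submodule.sum_mem
  intro k _
  have : (N i).map (algebraMap Fq K) j k * c (i, k) = (N i) j k • c (i, k) := by
    rw [Algebra.smul_def]; rfl
  rw [this]
  exact Submodule.smul_mem _ _ (Submodule.subset_span (Set.mem_range_self k))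

lemma wtSR_phiFq (N : Fin g → Matrix (Fin r) (Fin r) Fq) (hN : ∀ i, IsUnit (N i).det)
    (c : Fin g × Fin r → K) : wtSR Fq (phiFq N c) = wtSR Fq c := by
  rw [wtSR, wtSR]
  refine Finset.sum_congr rfl fun i _ => ?_
  have hsp : Submodule.span Fq (Set.range fun j : Fin r => phiFq N c (i, j)) =
      Submodule.span Fq (Set.range fun j : Fin r => c (i, j)) := by
    apply le_antisymm (span_phiFq_le N c i)
    have := span_phiFq_le (fun i => (N i)⁻¹) (phiFq N c) i
    rwa [phiFq_inv N hN c] at this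
  rw [hsp]

lemma sum_phi_mul (M : Fin g → Matrix (Fin r) (Fin r) K) (c d : Fin g × Fin r → K) :
    ∑ p : Fin g × Fin r, phi M c p * d p =
      ∑ p : Fin g × Fin r, c p * phi (fun i => (M i)ᵀ) d p := by
  rw [Fintype.sum_prod_type, Fintype.sum_prod_type]
  refine Finset.sum_congr rfl fun i _ => ?_
  have h1 : ∑ j : Fin r, phi M c (i, j) * d (i, j) =
      ((M i).mulVec (fun k => c (i, k))) ⬝ᵥ (fun k => d (i, k)) := rfl
  have h2 : ∑ j : Fin r, c (i, j) * phi (fun i => (M i)ᵀ) d (i, j) =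
      (fun k => c (i, k)) ⬝ᵥ ((M i)ᵀ.mulVec (fun k => d (i, k))) := rfl
  rw [h1, h2, dotProduct_comm, Matrix.dotProduct_mulVec, dotProduct_comm,
    Matrix.mulVec_transpose]

lemma sum_phiFq_mul (N : Fin g → Matrix (Fin r) (Fin r) Fq) (c d : Fin g × Fin r → K) :
    ∑ p : Fin g × Fin r, phiFq N c p * d p =
      ∑ p : Fin g × Fin r, c p * phiFq (fun i => (N i)ᵀ) d p := by
  have h : (fun i => ((N i).map (algebraMap Fq K))ᵀ) =
      fun i => (N i)ᵀ.map (algebraMap Fq K) := by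
    funext i; exact (Matrix.transpose_map).symm
  simp only [phiFq]
  rw [sum_phi_mul, h]

/-- The dual code. -/
def dualSub (E : Submodule K (Fin g × Fin r → K)) : Submodule K (Fin g × Fin r → K) where
  carrier := {d | ∀ c ∈ E, ∑ j, c j * d j = 0}
  add_mem' := by
    intro a b ha hb c hc
    simp only [Pi.add_apply, mul_add, Finset.sum_add_distrib]
    rw [ha c hc, hb c hc, add_zero]
  zero_mem' := by
    intro c hc
    simp
  smul_mem' := by
    intro a d hd c hc
    show ∑ j, c j * (a • d) j = 0
    have h : ∀ j : Fin g × Fin r, c j * (a • d) j = a * (c j * d j) := fun j => by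
      simp only [Pi.smul_apply, smul_eq_mul]; ring
    rw [Finset.sum_congr rfl fun j _ => h j, ← Finset.mul_sum, hd c hc, mul_zero]

lemma mem_dualSub {E : Submodule K (Fin g × Fin r → K)} {d : Fin g × Fin r → K} :
    d ∈ dualSub E ↔ ∀ c ∈ E, ∑ j, c j * d j = 0 := Iff.rfl

/-- The map to the dual space via the standard bilinear form. -/
def toDualStd : (Fin g × Fin r → K) →ₗ[K] Module.Dual K (Fin g × Fin r → K) where
  toFun d :=
    { toFun := fun c => ∑ j, c j * d j
      map_add' := fun a b => by simp [add_mul, Finset.sum_add_distrib]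
      map_smul' := fun a c => by simp [Finset.mul_sum, mul_assoc] }
  map_add' a b := by
    apply LinearMap.ext
    intro c
    simp [mul_add, Finset.sum_add_distrib]
  map_smul' a d := by
    apply LinearMap.ext
    intro c
    simp only [LinearMap.coe_mk, AddHom.coe_mk, RingHom.id_apply, LinearMap.smul_apply,
      smul_eq_mul, Finset.mul_sum]
    exact Finset.sum_congr rfl fun j _ => by simp; ring

lemma toDualStd_bijective : Function.Bijective (toDualStd (K := K) (g := g) (r := r)) := by
  have hinj : Function.Injective (toDualStd (K := K) (g := g) (r := r)) := by
    rw [injective_iff_map_eq_zero]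
    intro d hd
    funext p
    classical
    have h1 : (toDualStd d) (fun q : Fin g × Fin r => if q = p then (1 : K) else 0) =
        ∑ j, (if j = p then (1 : K) else 0) * d j := rfl
    have h2 := congrArg (fun f => f (fun q : Fin g × Fin r => if q = p then (1 : K) else 0)) hd
    simp only [LinearMap.zero_apply] at h2
    rw [h1] at h2
    calc d p = ∑ j, (if j = p then (1 : K) else 0) * d j := by
          rw [Finset.sum_eq_single p]
          · simp
          · intro b _ hb
            rw [if_neg hb, zero_mul]
          · intro h; exact absurd (Finset.mem_univ p) h
      _ = 0 := h2
  exact ⟨hinj, (LinearMap.injective_iff_surjective_of_finrank_eq_finrank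
    (Subspace.dual_finrank_eq (K := K) (V := Fin g × Fin r → K)).symm).1 hinj⟩

lemma dualSub_eq_comap (E : Submodule K (Fin g × Fin r → K)) :
    dualSub E = E.dualAnnihilator.comap toDualStd := by
  ext d
  simp only [mem_dualSub, Submodule.mem_comap, Submodule.mem_dualAnnihilator]
  rfl

lemma finrank_dualSub_add (E : Submodule K (Fin g × Fin r → K)) :
    finrank K (dualSub E) + finrank K E = g * r := by
  have hV : finrank K (Fin g × Fin r → K) = g * r := by
    rw [Module.finrank_pi]
    simp
  rw [dualSub_eq_comap]
  set eΦ := LinearEquiv.ofBijective toDualStd (toDualStd_bijective (K := K) (g := g) (r := r))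
    with heΦ
  have hcomap : E.dualAnnihilator.comap (toDualStd (K := K)) =
      E.dualAnnihilator.map (eΦ.symm : Module.Dual K (Fin g × Fin r → K) →ₗ[K]
        (Fin g × Fin r → K)) := by
    rw [← Submodule.comap_equiv_eq_map_symm]
    rfl
  rw [hcomap, LinearEquiv.finrank_map_eq eΦ.symm]
  have h1 : finrank K (E.dualAnnihilator) = finrank K ((Fin g × Fin r → K) ⧸ E) :=
    (LinearEquiv.finrank_eq (Subspace.quotEquivAnnihilator E)).symm
  rw [h1, ← hV]
  exact Submodule.finrank_quotient_add_finrank E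

lemma le_dualSub_dualSub (E : Submodule K (Fin g × Fin r → K)) :
    E ≤ dualSub (dualSub E) := by
  intro c hc d hd
  have := hd c hc
  rw [← this]
  exact Finset.sum_congr rfl fun j _ => mul_comm _ _

lemma dualSub_dualSub (E : Submodule K (Fin g × Fin r → K)) :
    dualSub (dualSub E) = E := by
  refine (Submodule.eq_of_le_of_finrank_le (le_dualSub_dualSub E) ?_).symm
  have h1 := finrank_dualSub_add (dualSub E)
  have h2 := finrank_dualSub_add E
  omega

lemma mem_dualSub_map (N : Fin g → Matrix (Fin r) (Fin r) Fq)
    (E : Submodule K (Fin g × Fin r → K)) (d : Fin g × Fin r → K) :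
    d ∈ dualSub (E.map (phiFq N)) ↔ phiFq (fun i => (N i)ᵀ) d ∈ dualSub E := by
  constructor
  · intro hd c hc
    have := hd (phiFq N c) ⟨c, hc, rfl⟩
    rw [← sum_phiFq_mul]
    exact this
  · intro hd c' hc'
    obtain ⟨c, hc, rfl⟩ := hc'
    rw [sum_phiFq_mul]
    exact hd c hc

lemma finrank_le_gr (E : Submodule K (Fin g × Fin r → K)) : finrank K E ≤ g * r := by
  have h := Submodule.finrank_le E
  rwa [Module.finrank_pi, Fintype.card_prod, Fintype.card_fin, Fintype.card_fin] at h

lemma wtH_le_of_zero_on (e : Fin g × Fin r → K) (T : Finset (Fin g × Fin r))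
    (h : ∀ p ∈ T, e p = 0) : wtH e ≤ g * r - T.card := by
  classical
  have hsub : {p : Fin g × Fin r | e p ≠ 0} ⊆ (↑T : Set (Fin g × Fin r))ᶜ := by
    intro p hp hpT
    exact hp (h p hpT)
  have h1 : wtH e ≤ ((↑T : Set (Fin g × Fin r))ᶜ).ncard := by
    calc wtH e = ({p : Fin g × Fin r | e p ≠ 0}).ncard := Nat.card_coe_set_eq _
      _ ≤ _ := Set.ncard_le_ncard hsub (Set.toFinite _)
  have h2 : (↑T : Set (Fin g × Fin r)).ncard + ((↑T : Set (Fin g × Fin r))ᶜ).ncard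
      = g * r := by
    rw [Set.ncard_add_ncard_compl, Nat.card_eq_fintype_card, Fintype.card_prod,
      Fintype.card_fin, Fintype.card_fin]
  rw [Set.ncard_coe_finset] at h2
  omega

/-- Singleton bound: a linear code of dimension at least 1 has a nonzero word of
Hamming weight at most `n - k + 1`. -/
lemma exists_low_wtH (E : Submodule K (Fin g × Fin r → K)) (h1 : 1 ≤ finrank K E) :
    ∃ e ∈ E, e ≠ 0 ∧ wtH e ≤ g * r - finrank K E + 1 := by
  classical
  set k := finrank K E with hk
  have hkn : k ≤ g * r := finrank_le_gr E
  obtain ⟨T, hTcard⟩ := Finset.exists_subset_card_eq (s := (Finset.univ : Finset (Fin g × Fin r))) (n := k - 1)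
    (by rw [Finset.card_univ, Fintype.card_prod, Fintype.card_fin, Fintype.card_fin]; omega)
  obtain ⟨hTsub, hTcard⟩ := hTcard
  set π := (LinearMap.funLeft K K (fun t : {x // x ∈ T} => (t : Fin g × Fin r))).comp
    E.subtype with hπ
  have hker : 0 < finrank K (LinearMap.ker π) := by
    have hrn := LinearMap.finrank_range_add_finrank_ker π
    have hrange : finrank K (LinearMap.range π) ≤ k - 1 := by
      have := Submodule.finrank_le (LinearMap.range π)
      rwa [Module.finrank_pi, Fintype.card_coe, hTcard] at this
    rw [← hk] at hrn
    omega
  have : Nontrivial (LinearMap.ker π) := Module.finrank_pos_iff.mp hker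
  obtain ⟨x, hx⟩ := exists_ne (0 : LinearMap.ker π)
  refine ⟨(x : E), (x : E).2, ?_, ?_⟩
  · intro h0
    apply hx
    apply Subtype.ext
    apply Subtype.ext
    simpa using h0
  · have hzero : ∀ p ∈ T, ((x : E) : Fin g × Fin r → K) p = 0 := by
      intro p hp
      have := x.2
      rw [LinearMap.mem_ker] at this
      exact congrFun this ⟨p, hp⟩
    have := wtH_le_of_zero_on ((x : E) : Fin g × Fin r → K) T hzero
    rw [hTcard] at this
    omega

/-- The key duality step: if all nonzero words of a `k`-dimensional code have Hamming
weight at least `n - k + 1`, then all nonzero words of the dual code have Hamming weight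
at least `k + 1`. -/
lemma mds_dual (E : Submodule K (Fin g × Fin r → K))
    (hE : ∀ e ∈ E, e ≠ 0 → g * r - finrank K E + 1 ≤ wtH e) :
    ∀ d ∈ dualSub E, d ≠ 0 → finrank K E + 1 ≤ wtH d := by
  classical
  intro d hd hd0
  by_contra hlt
  push_neg at hlt
  set k := finrank K E with hk
  have hkn : k ≤ g * r := finrank_le_gr E
  set S := Finset.univ.filter fun p : Fin g × Fin r => d p ≠ 0 with hS
  have hScard : S.card = wtH d := by
    rw [wtH, Nat.card_eq_fintype_card, Fintype.card_subtype]
  obtain ⟨T, hST, hTcard⟩ := Finset.exists_superset_card_eq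
    (show S.card ≤ k by omega)
    (by rw [Fintype.card_prod, Fintype.card_fin, Fintype.card_fin]; exact hkn)
  set π := (LinearMap.funLeft K K (fun t : {x // x ∈ T} => (t : Fin g × Fin r))).comp
    E.subtype with hπ
  have hinj : Function.Injective π := by
    rw [← LinearMap.ker_eq_bot]
    rw [Submodule.eq_bot_iff]
    intro x hx
    rw [LinearMap.mem_ker] at hx
    by_contra hx0
    have hzero : ∀ p ∈ T, ((x : Fin g × Fin r → K)) p = 0 := fun p hp => congrFun hx ⟨p, hp⟩
    have hwt := wtH_le_of_zero_on ((x : Fin g × Fin r → K)) T hzero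
    rw [hTcard] at hwt
    have hne : (x : Fin g × Fin r → K) ≠ 0 := by
      intro h0
      exact hx0 (Subtype.ext h0)
    have := hE (x : Fin g × Fin r → K) x.2 hne
    omega
  have hsurj : Function.Surjective π := by
    refine (LinearMap.injective_iff_surjective_of_finrank_eq_finrank ?_).1 hinj
    rw [Module.finrank_pi, Fintype.card_coe, hTcard]
  obtain ⟨p0, hp0⟩ : ∃ p, d p ≠ 0 := by
    by_contra h
    push_neg at h
    exact hd0 (funext fun p => h p)
  have hp0T : p0 ∈ T := hST (by simp [hS, hp0])
  obtain ⟨x, hxeq⟩ := hsurj (fun t => if (t : Fin g × Fin r) = p0 then 1 else 0)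
  have hzero : ∑ j, (x : Fin g × Fin r → K) j * d j = 0 := hd (x : Fin g × Fin r → K) x.2
  have hsumT : ∑ j ∈ T, (x : Fin g × Fin r → K) j * d j
      = ∑ j, (x : Fin g × Fin r → K) j * d j := by
    apply Finset.sum_subset (Finset.subset_univ T)
    intro q _ hqT
    have : d q = 0 := by
      by_contra hq
      exact hqT (hST (by simp [hS, hq]))
    rw [this, mul_zero]
  have hval : ∀ q ∈ T, (x : Fin g × Fin r → K) q = if q = p0 then 1 else 0 := by
    intro q hq
    exact congrFun hxeq ⟨q, hq⟩
  have : ∑ j ∈ T, (x : Fin g × Fin r → K) j * d j = d p0 := by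
    rw [Finset.sum_congr rfl fun q hq => by rw [hval q hq]]
    have : ∀ q ∈ T, (if q = p0 then (1 : K) else 0) * d q = if q = p0 then d q else 0 := by
      intro q _
      by_cases h : q = p0 <;> simp [h]
    rw [Finset.sum_congr rfl this, Finset.sum_ite_eq' T p0 (fun q => d q), if_pos hp0T]
  rw [hsumT, hzero] at this
  exact hp0 this.symm

lemma dSR_submodule (E : Submodule K (Fin g × Fin r → K)) :
    dSR Fq (E : Set (Fin g × Fin r → K)) = sInf {w | ∃ e ∈ E, e ≠ 0 ∧ wtSR Fq e = w} := by
  rw [dSR]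
  congr 1
  ext w
  constructor
  · rintro ⟨c, hc, d, hd, hne, hw⟩
    exact ⟨c - d, E.sub_mem hc hd, sub_ne_zero.2 hne, hw⟩
  · rintro ⟨e, he, hne, hw⟩
    exact ⟨e, he, 0, E.zero_mem, hne, by rwa [sub_zero]⟩

lemma dSR_le_of_mem (E : Submodule K (Fin g × Fin r → K)) {e : Fin g × Fin r → K}
    (he : e ∈ E) (h0 : e ≠ 0) : dSR Fq (E : Set (Fin g × Fin r → K)) ≤ wtSR Fq e := by
  rw [dSR_submodule]
  exact Nat.sInf_le ⟨e, he, h0, rfl⟩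

lemma dSR_eq_of (E : Submodule K (Fin g × Fin r → K)) (w : ℕ)
    (hw1 : ∀ e ∈ E, e ≠ 0 → w ≤ wtSR Fq e)
    (hw2 : ∃ e ∈ E, e ≠ 0 ∧ wtSR Fq e ≤ w) :
    dSR Fq (E : Set (Fin g × Fin r → K)) = w := by
  obtain ⟨e, he, h0, hle⟩ := hw2
  have heq : wtSR Fq e = w := le_antisymm hle (hw1 e he h0)
  apply le_antisymm
  · have := dSR_le_of_mem (Fq := Fq) E he h0
    omega
  · rw [dSR_submodule]
    refine le_csInf ⟨wtSR Fq e, e, he, h0, rfl⟩ fun b hb => ?_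
    obtain ⟨e', he', h0', rfl⟩ := hb
    exact hw1 e' he' h0'

lemma wtSR_ge_of_dSR_eq (E : Submodule K (Fin g × Fin r → K)) {w : ℕ}
    (hE : dSR Fq (E : Set (Fin g × Fin r → K)) = w) {e : Fin g × Fin r → K}
    (he : e ∈ E) (h0 : e ≠ 0) : w ≤ wtSR Fq e := by
  have := dSR_le_of_mem (Fq := Fq) E he h0
  omega

/-- For a single block, there is an invertible `Fq`-matrix making the Hamming weight
equal the rank. -/
lemma block_min_matrix (v : Fin r → K) :
    ∃ N : Matrix (Fin r) (Fin r) Fq, IsUnit N.det ∧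
      Nat.card {j : Fin r // ((N.map (algebraMap Fq K)).mulVec v) j ≠ 0} ≤
        finrank Fq (span Fq (Set.range v)) := by
  classical
  haveI : FiniteDimensional Fq K := Module.Finite.of_finite
  set s := finrank Fq (span Fq (Set.range v)) with hs
  set u : (Fin r → Fq) →ₗ[Fq] K := Fintype.linearCombination Fq v with hu
  have hrange : LinearMap.range u = span Fq (Set.range v) := Fintype.range_linearCombination Fq v
  have hrn : finrank Fq (LinearMap.range u) + finrank Fq (LinearMap.ker u) = r := by
    have := LinearMap.finrank_range_add_finrank_ker u
    rwa [Module.finrank_fin_fun] at this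
  have hranks : finrank Fq (LinearMap.range u) = s := by rw [hrange]
  obtain ⟨W', hW'⟩ := Submodule.exists_isCompl (LinearMap.ker u)
  have hadd : finrank Fq (LinearMap.ker u) + finrank Fq W' = r := by
    have := Submodule.finrank_add_eq_of_isCompl hW'
    rwa [Module.finrank_fin_fun] at this
  let bK := Module.finBasis Fq (LinearMap.ker u)
  let bW := Module.finBasis Fq W'
  let e := Submodule.prodEquivOfIsCompl _ _ hW'
  let eqv : (Fin (finrank Fq (LinearMap.ker u)) ⊕ Fin (finrank Fq W')) ≃ Fin r :=
    finSumFinEquiv.trans (finCongr hadd)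
  let b : Basis (Fin r) Fq (Fin r → Fq) := ((bK.prod bW).map e).reindex eqv
  set N : Matrix (Fin r) (Fin r) Fq := Matrix.of (fun j k => b j k) with hN
  have hdet : IsUnit N.det := by
    have hT : (Pi.basisFun Fq (Fin r)).toMatrix b = Nᵀ := by
      ext i j
      rw [Basis.toMatrix_apply, Pi.basisFun_repr]
      rfl
    have hinv := (Pi.basisFun Fq (Fin r)).invertibleToMatrix b
    have h1 : IsUnit ((Pi.basisFun Fq (Fin r)).toMatrix b).det :=
      Matrix.isUnit_det_of_invertible _
    rw [hT, Matrix.det_transpose] at h1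
    exact h1
  have hentry : ∀ j, ((N.map (algebraMap Fq K)).mulVec v) j = u (b j) := by
    intro j
    rw [Matrix.mulVec, dotProduct, hu, Fintype.linearCombination_apply]
    exact Finset.sum_congr rfl fun k _ => by rw [Algebra.smul_def]; rfl
  have hker : ∀ i : Fin (finrank Fq (LinearMap.ker u)),
      ((N.map (algebraMap Fq K)).mulVec v) (eqv (Sum.inl i)) = 0 := by
    intro i
    rw [hentry]
    have hb : b (eqv (Sum.inl i)) = ((bK i : (Fin r → Fq)) : Fin r → Fq) := by
      show (((bK.prod bW).map e).reindex eqv) (eqv (Sum.inl i)) = _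
      rw [Module.Basis.reindex_apply, Equiv.symm_apply_apply, Basis.map_apply]
      have hpr : (bK.prod bW) (Sum.inl i) = (bK i, (0 : W')) := by
        ext
        · rw [Basis.prod_apply_inl_fst]
        · rw [Basis.prod_apply_inl_snd]
      rw [hpr]
      show (bK i : (Fin r → Fq)) + ((0 : W') : (Fin r → Fq)) = _
      simp
    rw [hb]
    have := (bK i).2
    rwa [LinearMap.mem_ker] at this
  refine ⟨N, hdet, ?_⟩
  have hsub : {j : Fin r | ((N.map (algebraMap Fq K)).mulVec v) j ≠ 0} ⊆
      Set.range (fun i : Fin (finrank Fq W') => eqv (Sum.inr i)) := by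
    intro j hj
    obtain ⟨x, hx⟩ := eqv.surjective j
    cases x with
    | inl i =>
        exfalso
        apply hj
        rw [← hx]
        exact hker i
    | inr i => exact ⟨i, hx⟩
  calc Nat.card {j : Fin r // ((N.map (algebraMap Fq K)).mulVec v) j ≠ 0}
      = ({j : Fin r | ((N.map (algebraMap Fq K)).mulVec v) j ≠ 0}).ncard :=
        Nat.card_coe_set_eq _
    _ ≤ (Set.range (fun i : Fin (finrank Fq W') => eqv (Sum.inr i))).ncard :=
        Set.ncard_le_ncard hsub (Set.toFinite _)
    _ ≤ s := by
        have hinj : Function.Injective (fun i : Fin (finrank Fq W') => eqv (Sum.inr i)) :=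
          fun a b hab => Sum.inr_injective (eqv.injective hab)
        have h1 : (Set.range fun i : Fin (finrank Fq W') => eqv (Sum.inr i)).ncard
            = finrank Fq W' := by
          rw [← Nat.card_coe_set_eq, Nat.card_range_of_injective hinj,
            Nat.card_eq_fintype_card, Fintype.card_fin]
        omega

lemma exists_min_matrix (c : Fin g × Fin r → K) :
    ∃ N : Fin g → Matrix (Fin r) (Fin r) Fq, (∀ i, IsUnit (N i).det) ∧
      wtH (phiFq N c) ≤ wtSR Fq c := by
  choose N hdet hcard using fun i => block_min_matrix (Fq := Fq) (fun k => c (i, k))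
  refine ⟨N, hdet, ?_⟩
  rw [wtH_sum, wtSR]
  exact Finset.sum_le_sum fun i _ => hcard i

lemma exists_ne_zero_mem (E : Submodule K (Fin g × Fin r → K)) (h1 : 1 ≤ finrank K E) :
    ∃ e ∈ E, e ≠ (0 : Fin g × Fin r → K) := by
  have : Nontrivial E := Module.finrank_pos_iff.mp h1
  obtain ⟨x, hx⟩ := exists_ne (0 : E)
  exact ⟨x, x.2, fun h => hx (Subtype.ext h)⟩

lemma dSR_pos (E : Submodule K (Fin g × Fin r → K)) (h1 : 1 ≤ finrank K E) :
    1 ≤ dSR Fq (E : Set (Fin g × Fin r → K)) := by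
  rw [dSR_submodule]
  obtain ⟨e, he, h0⟩ := exists_ne_zero_mem E h1
  refine le_csInf ⟨wtSR Fq e, e, he, h0, rfl⟩ fun b hb => ?_
  obtain ⟨e', _, h0', rfl⟩ := hb
  exact wtSR_pos e' h0'

lemma dSR_le_gr (E : Submodule K (Fin g × Fin r → K)) (h1 : 1 ≤ finrank K E) :
    dSR Fq (E : Set (Fin g × Fin r → K)) ≤ g * r := by
  obtain ⟨e, he, h0⟩ := exists_ne_zero_mem E h1
  exact le_trans (dSR_le_of_mem (Fq := Fq) E he h0) (wtSR_le_card e)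

/-- Main lemma: if `E` is MSRD then its dual attains the corresponding Singleton bound. -/
lemma master (E : Submodule K (Fin g × Fin r → K)) (h1 : 1 ≤ finrank K E)
    (h2 : finrank K E + 1 ≤ g * r)
    (hd : dSR Fq (E : Set (Fin g × Fin r → K)) = g * r - finrank K E + 1) :
    dSR Fq ((dualSub E : Submodule K (Fin g × Fin r → K)) : Set (Fin g × Fin r → K))
      = finrank K E + 1 := by
  classical
  set k := finrank K E with hk
  have hkn : k ≤ g * r := finrank_le_gr E
  have hdualrank : finrank K (dualSub E) + k = g * r := finrank_dualSub_add E
  apply dSR_eq_of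
  · intro d hd0mem hd0
    obtain ⟨N, hNdet, hNle⟩ := exists_min_matrix (Fq := Fq) d
    set M : Fin g → Matrix (Fin r) (Fin r) Fq := fun i => ((N i)⁻¹)ᵀ with hM
    have hMdet : ∀ i, IsUnit (M i).det := fun i => by
      rw [hM, Matrix.det_transpose]
      exact Matrix.isUnit_nonsing_inv_det _ (hNdet i)
    set E' := E.map (phiFq (K := K) M) with hE'
    have hE'rank : finrank K E' = k := by
      rw [hE', ← phiEquiv_coe M hMdet, LinearEquiv.finrank_map_eq]
    have hE'wt : ∀ e' ∈ E', e' ≠ 0 → g * r - finrank K E' + 1 ≤ wtH e' := by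
      intro e' he' h0
      obtain ⟨e, he, rfl⟩ := he'
      have hene : e ≠ 0 := fun h => h0 (by rw [h]; exact map_zero _)
      calc g * r - finrank K E' + 1 = g * r - k + 1 := by rw [hE'rank]
        _ ≤ wtSR Fq e := wtSR_ge_of_dSR_eq E hd he hene
        _ = wtSR Fq (phiFq M e) := (wtSR_phiFq M hMdet e).symm
        _ ≤ wtH (phiFq M e) := wtSR_le_wtH _
    have hd' : phiFq N d ∈ dualSub E' := by
      rw [hE', mem_dualSub_map M E (phiFq N d), phiFq_phiFq]
      have hMN : (fun i => (M i)ᵀ * N i) = fun _ => (1 : Matrix (Fin r) (Fin r) Fq) := by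
        funext i
        rw [hM, Matrix.transpose_transpose, Matrix.nonsing_inv_mul _ (hNdet i)]
      rw [hMN]
      have hone : (fun _ : Fin g => ((1 : Matrix (Fin r) (Fin r) Fq)).map (algebraMap Fq K)) =
          fun _ => (1 : Matrix (Fin r) (Fin r) K) := by
        funext i; exact Matrix.map_one _ (map_zero _) (map_one _)
      rw [phiFq, hone, phi_one]
      exact hd0mem
    have hd'0 : phiFq N d ≠ 0 := by
      intro h
      apply hd0
      have := congrArg (phiFq (K := K) (fun i => (N i)⁻¹)) h
      rwa [phiFq_inv N hNdet d, map_zero] at this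
    have hfin := mds_dual E' hE'wt (phiFq N d) hd' hd'0
    rw [hE'rank] at hfin
    omega
  · obtain ⟨e, he, h0, hwt⟩ := exists_low_wtH (dualSub E) (by omega)
    refine ⟨e, he, h0, ?_⟩
    have := wtSR_le_wtH (Fq := Fq) e
    omega

end AuxMSRD

/-- A linear code `C ⊆ F_{q^m}^{gr}` with `1 ≤ dim C ≤ gr − 1` is MSRD
for the length partition `(g, r)` over `F_q` if and only if its dual code `C^⊥` is
MSRD for the same length partition. -/
theorem MSRD_iff_dual_MSRD
    (q m g r : ℕ) (hq : IsPrimePow q) (hm : 0 < m) (hg : 0 < g) (hr : 0 < r)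
    (Fq K : Type) [Field Fq] [Field K] [Fintype Fq] [Fintype K] [Algebra Fq K]
    (hcq : Fintype.card Fq = q) (hcK : Fintype.card K = q ^ m)
    (C : Submodule K (Fin g × Fin r → K))
    (h1 : 1 ≤ Module.finrank K ↥C) (h2 : Module.finrank K ↥C ≤ g * r - 1) :
    (Nat.card ↥C = (q ^ m) ^
        (g * r - dSR Fq ((C : Submodule K (Fin g × Fin r → K)) :
          Set (Fin g × Fin r → K)) + 1)) ↔
    (Nat.card ↥{d : Fin g × Fin r → K | ∀ c ∈ C, ∑ j, c j * d j = 0}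
      = (q ^ m) ^ (g * r -
          dSR Fq {d : Fin g × Fin r → K | ∀ c ∈ C, ∑ j, c j * d j = 0} + 1)) := by
  classical
  have hn : 1 ≤ g * r := Nat.one_le_iff_ne_zero.mpr (Nat.mul_ne_zero (by omega) (by omega))
  have hq2 : 2 ≤ q ^ m := by
    have hq' := hq.two_le
    calc 2 ≤ q := hq'
      _ = q ^ 1 := (pow_one q).symm
      _ ≤ q ^ m := Nat.pow_le_pow_right (by omega) hm
  have hcard : ∀ E : Submodule K (Fin g × Fin r → K),
      Nat.card ↥E = (q ^ m) ^ (Module.finrank K ↥E) := by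
    intro E
    haveI : Fintype ↥E := Fintype.ofFinite _
    rw [Nat.card_eq_fintype_card, card_eq_pow_finrank (K := K) (V := ↥E), hcK]
  have hD : {d : Fin g × Fin r → K | ∀ c ∈ C, ∑ j, c j * d j = 0} =
      ((dualSub C : Submodule K (Fin g × Fin r → K)) : Set (Fin g × Fin r → K)) := rfl
  rw [hD]
  have hpow : ∀ a b : ℕ, (q ^ m) ^ a = (q ^ m) ^ b ↔ a = b := fun a b =>
    (Nat.pow_right_injective hq2).eq_iff
  have hkn : Module.finrank K ↥C ≤ g * r := finrank_le_gr C
  have hfd : Module.finrank K ↥(dualSub C) + Module.finrank K ↥C = g * r :=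
    finrank_dualSub_add C
  have hdC1 : 1 ≤ dSR Fq (C : Set (Fin g × Fin r → K)) := dSR_pos C h1
  have hdC2 : dSR Fq (C : Set (Fin g × Fin r → K)) ≤ g * r := dSR_le_gr C h1
  have hD1 : 1 ≤ Module.finrank K ↥(dualSub C) := by omega
  have hdD1 : 1 ≤ dSR Fq ((dualSub C : Submodule K (Fin g × Fin r → K)) :
      Set (Fin g × Fin r → K)) := dSR_pos _ hD1
  have hdD2 : dSR Fq ((dualSub C : Submodule K (Fin g × Fin r → K)) :
      Set (Fin g × Fin r → K)) ≤ g * r := dSR_le_gr _ hD1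
  have hcard' : Nat.card ↥((dualSub C : Submodule K (Fin g × Fin r → K)) :
      Set (Fin g × Fin r → K)) = (q ^ m) ^ (Module.finrank K ↥(dualSub C)) :=
    hcard (dualSub C)
  rw [hcard C, hcard', hpow, hpow]
  constructor
  · intro h
    have hC : dSR Fq (C : Set (Fin g × Fin r → K)) =
        g * r - Module.finrank K ↥C + 1 := by omega
    have hmas := master C h1 (by omega) hC
    omega
  · intro h
    have hDd : dSR Fq ((dualSub C : Submodule K (Fin g × Fin r → K)) :
        Set (Fin g × Fin r → K)) = g * r - Module.finrank K ↥(dualSub C) + 1 := by omega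
    have hmas := master (dualSub C) hD1 (by omega) hDd
    rw [dualSub_dualSub] at hmas
    omega
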